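/- Let q : ℝ → [1,∞] be log-Hölder continuous and let s ∈ [1,2] be a constant. If there is a constant C > 0 such that ‖ĝ‖_{q(·)} ≤ C‖g‖_{L^s(ℝ)} for every Schwartz function g on ℝ, then q(0) ≤ s', where 1/s + 1/s' = 1. (The proof scales a fixed Schwartz function f with f̂ ≥ 1 on [−1,1] via f_λ(x) = λ f(λx), noting ‖f_λ‖_{L^s} = λ^{1/s'}‖f‖_{L^s}, and shows lim inf_{λ→0⁺} λ^{−1/q(0)} ‖f̂_λ‖_{q(·)} > 0 when q(0) < ∞.) -/

import Mathlib

open MeasureTheory Filter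
open scoped ENNReal FourierTransform

/-- The modular `ρ_q(g) = ∫_ℝ |g(x)|^{q(x)} dx` for an exponent `q : ℝ → [1,∞]`;
at points where `q x = ∞` the integrand is `0` if `|g x| ≤ 1` and `∞` otherwise. -/
noncomputable def modularE (q : ℝ → ℝ≥0∞) (g : ℝ → ℂ) : ℝ≥0∞ :=
  ∫⁻ x : ℝ,
    if q x = ∞ then (if ‖g x‖ ≤ 1 then 0 else ∞)
    else ENNReal.ofReal (‖g x‖ ^ (q x).toReal)

/-- The variable Lebesgue norm `‖g‖_{q(·)} = inf {λ > 0 : ρ_q(g/λ) ≤ 1}` (as an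
extended real number, `∞` if no such `λ` exists). -/
noncomputable def varNormE (q : ℝ → ℝ≥0∞) (g : ℝ → ℂ) : ℝ≥0∞ :=
  sInf {l : ℝ≥0∞ | ∃ lr : ℝ, 0 < lr ∧ l = ENNReal.ofReal lr ∧
    modularE q (fun x => g x / (lr : ℂ)) ≤ 1}

/-- `q` is log-Hölder continuous. -/
def LogHolder (q : ℝ → ℝ≥0∞) : Prop :=
  ∃ C : ℝ, 0 < C ∧ ∀ x y : ℝ, |x - y| < 1 / 2 →
    ((q x ≠ ∞ → q y ≠ ∞ →
        |(q x).toReal - (q y).toReal| ≤ C / (-Real.log |x - y|)) ∧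
      (q x = ∞ → ((q y)⁻¹).toReal ≤ C / (-Real.log |x - y|)))

/-- The conjugate exponent `a'` of `a ∈ [1,∞]`, i.e. `1/a + 1/a' = 1`. -/
noncomputable def conjExp (a : ℝ≥0∞) : ℝ≥0∞ := (1 - a⁻¹)⁻¹

lemma monomial_gauss_bound (m : ℕ) (x : ℝ) :
    |x| ^ m * Real.exp (-(x ^ 2 / 2)) ≤ 1 + 2 ^ m * m.factorial := by
  have hu : (0:ℝ) ≤ x ^ 2 / 2 := by positivity
  have hexple : Real.exp (-(x ^ 2 / 2)) ≤ 1 := Real.exp_le_one_iff.mpr (by linarith)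
  have hkey : (x ^ 2) ^ m * Real.exp (-(x ^ 2 / 2)) ≤ 2 ^ m * m.factorial := by
    have h1 : (x ^ 2 / 2) ^ m / m.factorial ≤ Real.exp (x ^ 2 / 2) := by
      refine le_trans ?_ (Real.sum_le_exp_of_nonneg hu (m + 1))
      exact Finset.single_le_sum (f := fun i => (x ^ 2 / 2) ^ i / i.factorial)
        (fun i _ => by positivity) (Finset.self_mem_range_succ m)
    have h2 : (x ^ 2 / 2) ^ m ≤ m.factorial * Real.exp (x ^ 2 / 2) := by
      rw [div_le_iff₀ (by positivity)] at h1; linarith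
    have h3 : (x ^ 2) ^ m = 2 ^ m * (x ^ 2 / 2) ^ m := by
      rw [← mul_pow]; ring_nf
    rw [h3, Real.exp_neg]
    have hE : (0:ℝ) < Real.exp (x ^ 2 / 2) := Real.exp_pos _
    calc (2:ℝ) ^ m * (x ^ 2 / 2) ^ m * (Real.exp (x ^ 2 / 2))⁻¹
        ≤ 2 ^ m * (m.factorial * Real.exp (x ^ 2 / 2)) * (Real.exp (x ^ 2 / 2))⁻¹ := by
          gcongr
      _ = 2 ^ m * m.factorial := by field_simp
  by_cases h : |x| ≤ 1
  · have h1 : |x| ^ m ≤ 1 := pow_le_one₀ (abs_nonneg x) h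
    have : |x| ^ m * Real.exp (-(x ^ 2 / 2)) ≤ 1 :=
      mul_le_one₀ h1 (Real.exp_nonneg _) hexple
    have h2 : (0:ℝ) ≤ 2 ^ m * m.factorial := by positivity
    linarith
  · push_neg at h
    have h1 : |x| ^ m ≤ (x ^ 2) ^ m := by
      refine pow_le_pow_left₀ (abs_nonneg x) ?_ m
      nlinarith [sq_abs x]
    have := mul_le_mul_of_nonneg_right h1 (Real.exp_nonneg (-(x ^ 2 / 2)))
    linarith

lemma poly_gauss_bound (P : Polynomial ℝ) :
    ∃ Cb : ℝ, ∀ x : ℝ, |Polynomial.eval x P| * Real.exp (-(x ^ 2 / 2)) ≤ Cb := by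
  refine ⟨∑ i ∈ Finset.range (P.natDegree + 1),
    |P.coeff i| * (1 + 2 ^ i * i.factorial), fun x => ?_⟩
  have h1 : |Polynomial.eval x P| ≤
      ∑ i ∈ Finset.range (P.natDegree + 1), |P.coeff i| * |x| ^ i := by
    rw [Polynomial.eval_eq_sum_range]
    refine (Finset.abs_sum_le_sum_abs _ _).trans (le_of_eq ?_)
    refine Finset.sum_congr rfl fun i _ => ?_
    rw [abs_mul, abs_pow]
  calc |Polynomial.eval x P| * Real.exp (-(x ^ 2 / 2))
      ≤ (∑ i ∈ Finset.range (P.natDegree + 1), |P.coeff i| * |x| ^ i)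
          * Real.exp (-(x ^ 2 / 2)) :=
        mul_le_mul_of_nonneg_right h1 (Real.exp_nonneg _)
    _ = ∑ i ∈ Finset.range (P.natDegree + 1),
          |P.coeff i| * (|x| ^ i * Real.exp (-(x ^ 2 / 2))) := by
        rw [Finset.sum_mul]; exact Finset.sum_congr rfl fun i _ => by ring
    _ ≤ ∑ i ∈ Finset.range (P.natDegree + 1),
          |P.coeff i| * (1 + 2 ^ i * i.factorial) :=
        Finset.sum_le_sum fun i _ =>
          mul_le_mul_of_nonneg_left (monomial_gauss_bound i x) (abs_nonneg _)

/-- The standard Gaussian as a real Schwartz function. -/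
noncomputable def gaussR : SchwartzMap ℝ ℝ where
  toFun x := Real.exp (-(x ^ 2 / 2))
  smooth' := Real.contDiff_exp.comp (((contDiff_id.pow 2).div_const 2).neg)
  decay' := by
    intro k n
    obtain ⟨Cb, hCb⟩ := poly_gauss_bound (Polynomial.X ^ k * ((Polynomial.hermite n).map (Int.castRingHom ℝ)))
    refine ⟨Cb, fun x => ?_⟩
    have h0 : iteratedFDeriv ℝ n (fun y => Real.exp (-(y ^ 2 / 2))) x =
        iteratedFDeriv ℝ n (fun y => Real.exp (-(y ^ 2 / 2))) x := rfl
    rw [norm_iteratedFDeriv_eq_norm_iteratedDeriv, iteratedDeriv_eq_iterate,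
      Polynomial.deriv_gaussian_eq_hermite_mul_gaussian]
    have h1 := hCb x
    rw [Polynomial.eval_mul, Polynomial.eval_pow, Polynomial.eval_X, abs_mul, abs_pow] at h1
    have h2 : (Polynomial.aeval x) (Polynomial.hermite n) =
        Polynomial.eval x ((Polynomial.hermite n).map (Int.castRingHom ℝ)) := by
      rw [Polynomial.aeval_def, Polynomial.eval₂_eq_eval_map]
      norm_cast
    rw [Real.norm_eq_abs, Real.norm_eq_abs, h2, abs_mul, abs_mul, abs_pow, abs_neg, abs_one,
      one_pow, one_mul, abs_of_pos (Real.exp_pos _)]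
    refine le_trans (le_of_eq (by ring)) h1

/-- Postcomposition of a real Schwartz function with the embedding `ℝ → ℂ`. -/
noncomputable def toC (f : SchwartzMap ℝ ℝ) : SchwartzMap ℝ ℂ where
  toFun x := (f x : ℂ)
  smooth' := Complex.ofRealCLM.contDiff.comp f.smooth'
  decay' := by
    intro k n
    obtain ⟨Cb, h⟩ := f.decay' k n
    refine ⟨Cb, fun x => ?_⟩
    have hcomp : iteratedFDeriv ℝ n (fun y => ((f y : ℂ))) x
        = Complex.ofRealCLM.compContinuousMultilinearMap (iteratedFDeriv ℝ n (⇑f) x) :=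
      Complex.ofRealCLM.iteratedFDeriv_comp_left f.smooth'.contDiffAt (by exact_mod_cast le_top)
    have hle : ‖Complex.ofRealCLM.compContinuousMultilinearMap (iteratedFDeriv ℝ n (⇑f) x)‖
        ≤ ‖iteratedFDeriv ℝ n (⇑f) x‖ := by
      refine le_trans (Complex.ofRealCLM.norm_compContinuousMultilinearMap_le _) ?_
      have h1 : ‖Complex.ofRealCLM‖ ≤ 1 :=
        Complex.ofRealCLM.opNorm_le_bound zero_le_one (fun y => by simp)
      calc ‖Complex.ofRealCLM‖ * ‖iteratedFDeriv ℝ n (⇑f) x‖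
          ≤ 1 * ‖iteratedFDeriv ℝ n (⇑f) x‖ := by gcongr
        _ = _ := one_mul _
    rw [hcomp]
    calc ‖x‖ ^ k * ‖Complex.ofRealCLM.compContinuousMultilinearMap (iteratedFDeriv ℝ n (⇑f) x)‖
        ≤ ‖x‖ ^ k * ‖iteratedFDeriv ℝ n (⇑f) x‖ := by gcongr
      _ ≤ Cb := h x

/-- The scaled Gaussian `x ↦ exp (-π c² x²)` as a complex Schwartz function. -/
noncomputable def gaussC (c : ℝ) (hc : c ≠ 0) : SchwartzMap ℝ ℂ :=
  SchwartzMap.compCLMOfContinuousLinearEquiv ℝ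
    (LinearEquiv.toContinuousLinearEquiv (LinearEquiv.smulOfNeZero ℝ ℝ c hc)) (toC gaussR)

lemma gaussC_apply (c : ℝ) (hc : c ≠ 0) (x : ℝ) :
    gaussC c hc x = (Real.exp (-((c * x) ^ 2 / 2)) : ℝ) := by
  rfl

lemma gaussC_eq (l : ℝ) (hl : 0 < l) (hc : Real.sqrt (2 * Real.pi) * l ≠ 0) :
    ⇑(gaussC (Real.sqrt (2 * Real.pi) * l) hc) =
      fun x : ℝ => Complex.exp (-(Real.pi : ℂ) * ((l : ℂ) ^ 2) * (x : ℂ) ^ 2) := by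
  funext x
  rw [gaussC_apply]
  have h2π : (0:ℝ) ≤ 2 * Real.pi := by positivity
  have h1 : (Real.sqrt (2 * Real.pi) * l * x) ^ 2 / 2 = Real.pi * l ^ 2 * x ^ 2 := by
    rw [mul_pow, mul_pow, Real.sq_sqrt h2π]; ring
  rw [h1]
  rw [Complex.ofReal_exp]
  congr 1
  push_cast
  ring

lemma fourier_gaussC (l : ℝ) (hl : 0 < l) (hc : Real.sqrt (2 * Real.pi) * l ≠ 0) :
    𝓕 ⇑(gaussC (Real.sqrt (2 * Real.pi) * l) hc) =
      fun t : ℝ => 1 / ((l : ℂ) ^ 2) ^ (1 / 2 : ℂ) *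
        Complex.exp (-(Real.pi : ℂ) / ((l : ℂ) ^ 2) * (t : ℂ) ^ 2) := by
  rw [gaussC_eq l hl hc]
  have hb : (0:ℝ) < (((l : ℂ) ^ 2)).re := by
    have : ((l : ℂ) ^ 2) = ((l ^ 2 : ℝ) : ℂ) := by push_cast; ring
    rw [this, Complex.ofReal_re]; positivity
  exact fourier_gaussian_pi hb

lemma norm_fourier_gaussC (l : ℝ) (hl : 0 < l) (hc : Real.sqrt (2 * Real.pi) * l ≠ 0)
    (t : ℝ) (ht : |t| ≤ l) :
    Real.exp (-Real.pi) / l ≤ ‖𝓕 (⇑(gaussC (Real.sqrt (2 * Real.pi) * l) hc)) t‖ := by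
  rw [fourier_gaussC l hl hc]
  have hl2 : ((l : ℂ) ^ 2) = ((l ^ 2 : ℝ) : ℂ) := by push_cast; ring
  have hB : ‖((l : ℂ) ^ 2) ^ (1 / 2 : ℂ)‖ = l := by
    rw [hl2, Complex.norm_cpow_eq_rpow_re_of_pos (by positivity)]
    have h12 : ((1 / 2 : ℂ)).re = (1/2 : ℝ) := by norm_num
    rw [h12, ← Real.sqrt_eq_rpow, Real.sqrt_sq hl.le]
  have hz : (-(Real.pi : ℂ) / ((l : ℂ) ^ 2) * (t : ℂ) ^ 2) =
      ((-(Real.pi / l ^ 2 * t ^ 2) : ℝ) : ℂ) := by push_cast; ring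
  rw [norm_mul, hz]
  have h1 : ‖(1 : ℂ) / ((l : ℂ) ^ 2) ^ (1 / 2 : ℂ)‖ = l⁻¹ := by
    rw [norm_div, norm_one, hB, one_div]
  have h2 : ‖Complex.exp ((-(Real.pi / l ^ 2 * t ^ 2) : ℝ) : ℂ)‖ =
      Real.exp (-(Real.pi / l ^ 2 * t ^ 2)) := by
    rw [Complex.norm_exp, Complex.ofReal_re]
  rw [h1, h2]
  have ht2 : t ^ 2 ≤ l ^ 2 := by
    rw [← sq_abs t]; exact pow_le_pow_left₀ (abs_nonneg t) ht 2
  have h3 : Real.exp (-Real.pi) ≤ Real.exp (-(Real.pi / l ^ 2 * t ^ 2)) := by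
    apply Real.exp_le_exp.mpr
    have : Real.pi / l ^ 2 * t ^ 2 ≤ Real.pi / l ^ 2 * l ^ 2 := by
      gcongr
    have hll : Real.pi / l ^ 2 * l ^ 2 = Real.pi := by field_simp
    linarith [this, hll]
  rw [div_eq_inv_mul]
  exact mul_le_mul_of_nonneg_left h3 (by positivity)

lemma elp_gaussC (l s : ℝ) (hl : 0 < l) (hs : 1 ≤ s)
    (hc : Real.sqrt (2 * Real.pi) * l ≠ 0) :
    eLpNorm (⇑(gaussC (Real.sqrt (2 * Real.pi) * l) hc)) (ENNReal.ofReal s) volume ≤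
      ENNReal.ofReal (l⁻¹ ^ (s⁻¹ : ℝ)) := by
  have hs0 : (0:ℝ) < s := lt_of_lt_of_le one_pos hs
  have hp0 : ENNReal.ofReal s ≠ 0 := (ENNReal.ofReal_pos.mpr hs0).ne'
  rw [eLpNorm_eq_lintegral_rpow_enorm_toReal hp0 ENNReal.ofReal_ne_top,
    ENNReal.toReal_ofReal hs0.le]
  have hb : (0:ℝ) < s * Real.pi * l ^ 2 := by positivity
  have hfx : ∀ x : ℝ, (‖gaussC (Real.sqrt (2 * Real.pi) * l) hc x‖ₑ) ^ (s : ℝ) =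
      ENNReal.ofReal (Real.exp (-(s * Real.pi * l ^ 2) * x ^ 2)) := by
    intro x
    have hx : gaussC (Real.sqrt (2 * Real.pi) * l) hc x =
        Complex.exp (-(Real.pi : ℂ) * ((l : ℂ) ^ 2) * (x : ℂ) ^ 2) := by
      rw [gaussC_eq l hl hc]
    have hz : (-(Real.pi : ℂ) * ((l : ℂ) ^ 2) * (x : ℂ) ^ 2) =
        ((-(Real.pi * l ^ 2 * x ^ 2) : ℝ) : ℂ) := by push_cast; ring
    have hn : ‖gaussC (Real.sqrt (2 * Real.pi) * l) hc x‖ =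
        Real.exp (-(Real.pi * l ^ 2 * x ^ 2)) := by
      rw [hx, hz, Complex.norm_exp, Complex.ofReal_re]
    rw [← ofReal_norm, hn, ENNReal.ofReal_rpow_of_pos (Real.exp_pos _),
      ← Real.exp_mul]
    congr 1
    ring
  simp_rw [hfx]
  have hint : ∫⁻ x : ℝ, ENNReal.ofReal (Real.exp (-(s * Real.pi * l ^ 2) * x ^ 2)) =
      ENNReal.ofReal (∫ x : ℝ, Real.exp (-(s * Real.pi * l ^ 2) * x ^ 2)) :=
    (ofReal_integral_eq_lintegral_ofReal (integrable_exp_neg_mul_sq hb)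
      (ae_of_all _ fun x => (Real.exp_pos _).le)).symm
  rw [hint, integral_gaussian]
  have hsqrt : Real.sqrt (Real.pi / (s * Real.pi * l ^ 2)) ≤ l⁻¹ := by
    have h1 : Real.pi / (s * Real.pi * l ^ 2) ≤ (l⁻¹) ^ 2 := by
      rw [div_le_iff₀ hb]
      have : (l⁻¹) ^ 2 * (s * Real.pi * l ^ 2) = s * Real.pi := by
        field_simp
      rw [this]
      nlinarith [Real.pi_pos]
    calc Real.sqrt (Real.pi / (s * Real.pi * l ^ 2)) ≤ Real.sqrt ((l⁻¹) ^ 2) :=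
          Real.sqrt_le_sqrt h1
      _ = l⁻¹ := Real.sqrt_sq (by positivity)
  calc (ENNReal.ofReal (Real.sqrt (Real.pi / (s * Real.pi * l ^ 2)))) ^ (1 / s)
      ≤ (ENNReal.ofReal l⁻¹) ^ (1 / s) := by
        exact ENNReal.rpow_le_rpow (ENNReal.ofReal_le_ofReal hsqrt) (by positivity)
    _ = ENNReal.ofReal (l⁻¹ ^ (s⁻¹ : ℝ)) := by
        rw [ENNReal.ofReal_rpow_of_pos (by positivity), one_div]

lemma small_rpow (c α ε : ℝ) (hα : 0 < α) (hε : 0 < ε) :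
    ∀ᶠ l in nhdsWithin (0:ℝ) (Set.Ioi 0), c * l ^ (α : ℝ) < ε := by
  have hcont : ContinuousAt (fun l : ℝ => l ^ (α : ℝ)) 0 :=
    Real.continuousAt_rpow_const 0 α (Or.inr hα.le)
  have h0 : (0:ℝ) ^ (α:ℝ) = 0 := Real.zero_rpow hα.ne'
  have htend : Tendsto (fun l : ℝ => c * l ^ (α:ℝ)) (nhdsWithin 0 (Set.Ioi 0)) (nhds 0) := by
    have h1 : Tendsto (fun l : ℝ => l ^ (α:ℝ)) (nhdsWithin (0:ℝ) (Set.Ioi 0)) (nhds ((0:ℝ) ^ (α:ℝ))) :=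
      hcont.tendsto.mono_left nhdsWithin_le_nhds
    have h2 := h1.const_mul c
    rw [h0, mul_zero] at h2
    exact h2
  exact htend.eventually_lt_const hε

theorem stmt5 (q : ℝ → ℝ≥0∞) (hq1 : ∀ x, 1 ≤ q x) (hqLH : LogHolder q)
    (s : ℝ) (hs1 : 1 ≤ s) (hs2 : s ≤ 2)
    (C : ℝ) (hC : 0 < C)
    (hHY : ∀ g : SchwartzMap ℝ ℂ,
      varNormE q (𝓕 ⇑g) ≤
        ENNReal.ofReal C * eLpNorm (⇑g) (ENNReal.ofReal s) volume) :
    q 0 ≤ conjExp (ENNReal.ofReal s) := by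
  rcases eq_or_lt_of_le hs1 with hseq | hs1'
  · have : conjExp (ENNReal.ofReal s) = ⊤ := by
      rw [← hseq]
      simp [conjExp]
    rw [this]; exact le_top
  by_contra hcon
  rw [not_le] at hcon
  set t : ℝ := (1 - s⁻¹)⁻¹ with htdef
  have hs0 : (0:ℝ) < s := by linarith
  have hsinv : s⁻¹ < 1 := by
    rw [inv_lt_one_iff₀]; right; exact hs1'
  have ht1 : 0 < 1 - s⁻¹ := by linarith
  have ht0 : 0 < t := inv_pos.mpr ht1
  have htinv : t⁻¹ = 1 - s⁻¹ := inv_inv _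
  have hconj : conjExp (ENNReal.ofReal s) = ENNReal.ofReal t := by
    rw [conjExp.eq_1, ← ENNReal.ofReal_inv_of_pos hs0, ← ENNReal.ofReal_one,
      ← ENNReal.ofReal_sub _ (by positivity), ← ENNReal.ofReal_inv_of_pos ht1]
  rw [hconj] at hcon
  obtain ⟨CL, hCL, hLH⟩ := hqLH
  -- Step 1: from log-Hölder continuity, find `r > t` with `q ≥ r` near `0`.
  obtain ⟨r, htr, δ, hδ0, hδ14, hδq⟩ :
      ∃ r : ℝ, t < r ∧ ∃ δ : ℝ, 0 < δ ∧ δ ≤ 1/4 ∧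
        ∀ x : ℝ, |x| ≤ δ → q x ≠ ∞ → r ≤ (q x).toReal := by
    by_cases hq0 : q 0 = ∞
    · refine ⟨t + 1, lt_add_one t, min (1/4) (Real.exp (-(CL * (t+1)))),
        lt_min_iff.mpr ⟨by norm_num, Real.exp_pos _⟩, min_le_left _ _, ?_⟩
      intro x hx hqx
      rcases eq_or_ne x 0 with rfl | hx0
      · exact absurd hq0 hqx
      have hr0 : (0:ℝ) < t + 1 := by linarith
      have hxpos : 0 < |x| := abs_pos.mpr hx0
      have hlog : Real.log |x| ≤ -(CL * (t+1)) := by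
        calc Real.log |x| ≤ Real.log (Real.exp (-(CL*(t+1)))) :=
              Real.log_le_log hxpos (le_trans hx (min_le_right _ _))
          _ = -(CL*(t+1)) := Real.log_exp _
      have hL : CL * (t+1) ≤ -Real.log |x| := by linarith
      have hLpos : (0:ℝ) < -Real.log |x| := lt_of_lt_of_le (by positivity) hL
      have hx14 : |x| ≤ 1/4 := le_trans hx (min_le_left _ _)
      have hx12 : |(0:ℝ) - x| < 1/2 := by
        rw [zero_sub, abs_neg]; linarith
      have h2 := (hLH 0 x hx12).2 hq0
      rw [zero_sub, abs_neg, ENNReal.toReal_inv] at h2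
      set a := (q x).toReal with hadef
      have ha1 : (1:ℝ) ≤ a := by
        rw [hadef, ← ENNReal.toReal_one]; exact ENNReal.toReal_mono hqx (hq1 x)
      have ha0 : (0:ℝ) < a := lt_of_lt_of_le one_pos ha1
      have h3 : CL / (-Real.log |x|) ≤ CL / (CL * (t+1)) := by
        gcongr
      have h4 : CL / (CL * (t+1)) = (t+1)⁻¹ := by field_simp
      have h5 : a⁻¹ ≤ (t+1)⁻¹ := h2.trans (h3.trans_eq h4)
      rwa [inv_le_inv₀ ha0 hr0] at h5
    · have htq0 : t < (q 0).toReal :=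
        (ENNReal.ofReal_lt_iff_lt_toReal ht0.le hq0).mp hcon
      set q0 := (q 0).toReal with hq0def
      set r := (t + q0)/2 with hrdef
      have htr : t < r := by rw [hrdef]; linarith
      have hrq : r < q0 := by rw [hrdef]; linarith
      have hε : (0:ℝ) < q0 - r := by linarith
      refine ⟨r, htr, min (1/4) (Real.exp (-(CL / (q0 - r)))),
        lt_min_iff.mpr ⟨by norm_num, Real.exp_pos _⟩, min_le_left _ _, ?_⟩
      intro x hx hqx
      rcases eq_or_ne x 0 with rfl | hx0
      · exact hrq.le
      have hxpos : 0 < |x| := abs_pos.mpr hx0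
      have hlog : Real.log |x| ≤ -(CL / (q0 - r)) := by
        calc Real.log |x| ≤ Real.log (Real.exp (-(CL / (q0 - r)))) :=
              Real.log_le_log hxpos (le_trans hx (min_le_right _ _))
          _ = -(CL / (q0 - r)) := Real.log_exp _
      have hL : CL / (q0 - r) ≤ -Real.log |x| := by linarith
      have hLpos : (0:ℝ) < -Real.log |x| := lt_of_lt_of_le (by positivity) hL
      have hx14 : |x| ≤ 1/4 := le_trans hx (min_le_left _ _)
      have hx12 : |x - (0:ℝ)| < 1/2 := by
        rw [sub_zero]; linarith
      have h2 := (hLH x 0 hx12).1 hqx hq0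
      rw [sub_zero] at h2
      have h3 : CL / (-Real.log |x|) ≤ CL / (CL / (q0 - r)) := by gcongr
      have h4 : CL / (CL / (q0 - r)) = q0 - r := by field_simp
      have h5 : |(q x).toReal - q0| ≤ q0 - r := h2.trans (h3.trans_eq h4)
      have h6 := (abs_le.mp h5).1
      linarith
  -- Step 2: choose a small scale `l`
  have hrpos : (0:ℝ) < r := lt_trans ht0 htr
  have hα : (0:ℝ) < t⁻¹ - r⁻¹ := by
    have h1 : r⁻¹ < t⁻¹ := by
      rw [inv_lt_inv₀ hrpos ht0]
      exact htr
    linarith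
  obtain ⟨l, ⟨hl0, hlδ⟩, hcond2, hcond3⟩ :=
    ((eventually_of_mem
        (Ioc_mem_nhdsGT_of_mem (⟨le_refl (0:ℝ), hδ0⟩ : (0:ℝ) ∈ Set.Ico 0 δ))
        (fun y (hy : y ∈ Set.Ioc (0:ℝ) δ) => hy)).and
      ((small_rpow (2*C) t⁻¹ (Real.exp (-Real.pi)) (by positivity) (Real.exp_pos _)).and
       (small_rpow (2*C*(2:ℝ)^(-(r⁻¹):ℝ)) (t⁻¹ - r⁻¹) (Real.exp (-Real.pi)) hα
         (Real.exp_pos _)))).exists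
  have hc : Real.sqrt (2*Real.pi) * l ≠ 0 := by positivity
  have hrx : (0:ℝ) < l⁻¹ ^ (s⁻¹:ℝ) := Real.rpow_pos_of_pos (by positivity) _
  have hvar : varNormE q (𝓕 ⇑(gaussC (Real.sqrt (2*Real.pi) * l) hc)) <
      ENNReal.ofReal (2*C*(l⁻¹ ^ (s⁻¹:ℝ))) := by
    have hstep : ENNReal.ofReal C *
        eLpNorm (⇑(gaussC (Real.sqrt (2*Real.pi) * l) hc)) (ENNReal.ofReal s) volume
        ≤ ENNReal.ofReal (C * (l⁻¹ ^ (s⁻¹:ℝ))) := by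
      calc ENNReal.ofReal C *
          eLpNorm (⇑(gaussC (Real.sqrt (2*Real.pi) * l) hc)) (ENNReal.ofReal s) volume
          ≤ ENNReal.ofReal C * ENNReal.ofReal (l⁻¹ ^ (s⁻¹:ℝ)) := by
            gcongr
            exact elp_gaussC l s hl0 hs1 hc
        _ = ENNReal.ofReal (C * (l⁻¹ ^ (s⁻¹:ℝ))) := (ENNReal.ofReal_mul hC.le).symm
    refine lt_of_le_of_lt ((hHY _).trans hstep) ?_
    rw [ENNReal.ofReal_lt_ofReal_iff (by positivity)]
    nlinarith
  rw [varNormE] at hvar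
  obtain ⟨a, haS, halt⟩ := sInf_lt_iff.mp hvar
  obtain ⟨lr, hlr0, rfl, hmod⟩ := haS
  have hlrM : lr < 2*C*(l⁻¹ ^ (s⁻¹:ℝ)) := by
    rw [ENNReal.ofReal_lt_ofReal_iff (by positivity)] at halt; exact halt
  have e3 : l⁻¹ ^ (s⁻¹:ℝ) = l ^ (-(s⁻¹):ℝ) := by
    rw [Real.inv_rpow hl0.le, ← Real.rpow_neg hl0.le]
  have e4 : l * l ^ (-(s⁻¹):ℝ) = l ^ (t⁻¹:ℝ) := by
    nth_rewrite 1 [← Real.rpow_one l]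
    rw [← Real.rpow_add hl0]
    congr 1
    rw [htinv]
    ring
  have hlM : l * lr < 2*C*l^(t⁻¹:ℝ) := by
    have h1 : l * lr < l * (2*C*(l⁻¹^(s⁻¹:ℝ))) := mul_lt_mul_of_pos_left hlrM hl0
    have h2 : l * (2*C*(l⁻¹^(s⁻¹:ℝ))) = 2*C*l^(t⁻¹:ℝ) := by
      rw [e3]
      calc l * (2*C*l^(-(s⁻¹):ℝ)) = 2*C*(l * l^(-(s⁻¹):ℝ)) := by ring
        _ = 2*C*l^(t⁻¹:ℝ) := by rw [e4]
    linarith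
  set B := Real.exp (-Real.pi) / (l * lr) with hBdef
  have hllr : (0:ℝ) < l * lr := by positivity
  have hB1 : 1 < B := by
    rw [hBdef, lt_div_iff₀ hllr, one_mul]
    linarith [hlM, hcond2]
  have hB0 : (0:ℝ) < B := lt_trans one_pos hB1
  have hmodlb : ENNReal.ofReal (B ^ (r:ℝ) * (2*l)) ≤ 1 := by
    refine le_trans ?_ hmod
    simp only [modularE]
    rw [ENNReal.ofReal_mul (by positivity)]
    calc ENNReal.ofReal (B^(r:ℝ)) * ENNReal.ofReal (2*l)
        = ∫⁻ _ in Set.Icc (-l) l, ENNReal.ofReal (B^(r:ℝ)) ∂volume := by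
          rw [setLIntegral_const, Real.volume_Icc]
          congr 2
          ring
      _ ≤ ∫⁻ x in Set.Icc (-l) l,
            (if q x = ∞ then
              (if ‖𝓕 (⇑(gaussC (Real.sqrt (2*Real.pi)*l) hc)) x / (lr:ℂ)‖ ≤ 1 then 0 else ∞)
             else ENNReal.ofReal
              (‖𝓕 (⇑(gaussC (Real.sqrt (2*Real.pi)*l) hc)) x / (lr:ℂ)‖ ^ (q x).toReal)) ∂volume := by
          refine setLIntegral_mono' measurableSet_Icc ?_
          intro x hx
          have hxl : |x| ≤ l := abs_le.mpr ⟨hx.1, hx.2⟩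
          have hnorm : B ≤ ‖𝓕 (⇑(gaussC (Real.sqrt (2*Real.pi)*l) hc)) x / (lr:ℂ)‖ := by
            rw [norm_div, Complex.norm_real, Real.norm_eq_abs, abs_of_pos hlr0, hBdef,
              ← div_div]
            gcongr
            exact norm_fourier_gaussC l hl0 hc x hxl
          by_cases hqx : q x = ∞
          · rw [if_pos hqx, if_neg (by push_neg; linarith [hnorm, hB1])]
            exact le_top
          · rw [if_neg hqx]
            apply ENNReal.ofReal_le_ofReal
            have hq_r : r ≤ (q x).toReal := hδq x (le_trans hxl hlδ) hqx
            calc B^(r:ℝ) ≤ B^((q x).toReal) := (Real.rpow_le_rpow_left_iff hB1).mpr hq_r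
              _ ≤ ‖𝓕 (⇑(gaussC (Real.sqrt (2*Real.pi)*l) hc)) x / (lr:ℂ)‖ ^ ((q x).toReal) :=
                Real.rpow_le_rpow hB0.le hnorm ENNReal.toReal_nonneg
      _ ≤ _ := setLIntegral_le_lintegral _ _
  have hkey : B^(r:ℝ) * (2*l) ≤ 1 := ENNReal.ofReal_le_one.mp hmodlb
  have hBr : B^(r:ℝ) ≤ (2*l)⁻¹ := by
    rw [← one_div, le_div_iff₀ (by positivity)]
    exact hkey
  have hBle : B ≤ ((2*l)⁻¹)^(r⁻¹:ℝ) := by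
    have h1 : B = (B^(r:ℝ))^(r⁻¹:ℝ) := by
      rw [← Real.rpow_mul hB0.le, mul_inv_cancel₀ (ne_of_gt hrpos), Real.rpow_one]
    rw [h1]
    exact Real.rpow_le_rpow (Real.rpow_pos_of_pos hB0 _).le hBr (by positivity)
  have e1 : ((2*l)⁻¹)^(r⁻¹:ℝ) = (2:ℝ)^(-(r⁻¹):ℝ) * l^(-(r⁻¹):ℝ) := by
    rw [Real.inv_rpow (by positivity), ← Real.rpow_neg (by positivity),
      Real.mul_rpow (by norm_num) hl0.le]
  have e2 : l^(-(r⁻¹):ℝ) * l^(t⁻¹:ℝ) = l^(t⁻¹ - r⁻¹ : ℝ) := by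
    rw [← Real.rpow_add hl0]
    congr 1
    ring
  have hfin1 : Real.exp (-Real.pi) = B * (l * lr) := by
    rw [hBdef]; field_simp
  have hlast : B * (l * lr) < Real.exp (-Real.pi) := by
    calc B * (l*lr) ≤ ((2*l)⁻¹)^(r⁻¹:ℝ) * (l*lr) :=
          mul_le_mul_of_nonneg_right hBle hllr.le
      _ < ((2*l)⁻¹)^(r⁻¹:ℝ) * (2*C*l^(t⁻¹:ℝ)) :=
          mul_lt_mul_of_pos_left hlM (Real.rpow_pos_of_pos (by positivity) _)
      _ = (2*C*(2:ℝ)^(-(r⁻¹):ℝ)) * l^(t⁻¹ - r⁻¹ : ℝ) := by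
          rw [e1, ← e2]; ring
      _ < Real.exp (-Real.pi) := hcond3
  rw [← hfin1] at hlast
  exact absurd hlast (lt_irrefl _)
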